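/- Let G = G₀(u) ⋄ H(u) be a connected non-odd-bipartite k-uniform hypergraph (k even) with H odd-bipartite, and let x be a first eigenvector of G. Define β_H(x) = d_H(u) x_u^k + ∑_{e ∈ E_H(u)} ∏_{v∈e} x_v. Then β_H(x) ≤ 0; moreover if x_u ≠ 0 then β_H(x) < 0. -/

import Mathlib

open Finset

structure UHG (V : Type) [DecidableEq V] [Fintype V] (k : ℕ) where
  edges : Finset (Finset V)
  uniform : ∀ e ∈ edges, e.card = k

namespace UHG

variable {V : Type} [DecidableEq V] [Fintype V] {k : ℕ}

/-- The vertices of the hypergraph: all vertices covered by some edge. -/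
def verts (G : UHG V k) : Finset V := G.edges.biUnion id

/-- The set of edges containing a given vertex. -/
def incEdges (G : UHG V k) (v : V) : Finset (Finset V) :=
  G.edges.filter fun e => v ∈ e

/-- The degree of a vertex. -/
def deg (G : UHG V k) (v : V) : ℕ := (G.incEdges v).card

/-- Two vertices are adjacent if some edge contains both. -/
def Adj (G : UHG V k) (u v : V) : Prop := ∃ e ∈ G.edges, u ∈ e ∧ v ∈ e

/-- A hypergraph is connected if any two of its vertices are joined by a walk. -/
def Connected (G : UHG V k) : Prop :=
  G.verts.Nonempty ∧ ∀ u ∈ G.verts, ∀ v ∈ G.verts, Relation.ReflTransGen G.Adj u v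

/-- A hypergraph is odd-bipartite if there is a set `U` of vertices such that
every edge meets `U` in an odd number of vertices (the bipartition is `{U, V \ U}`). -/
def OddBipartite (G : UHG V k) : Prop :=
  ∃ U : Finset V, ∀ e ∈ G.edges, Odd (e ∩ U).card

/-- The signless Laplacian form `Q(G) x^k = ∑_{e ∈ E} (∑_{v∈e} x_v^k + k ∏_{v∈e} x_v)`. -/
def Qform (G : UHG V k) (x : V → ℝ) : ℝ :=
  ∑ e ∈ G.edges, ((∑ v ∈ e, x v ^ k) + (k : ℝ) * ∏ v ∈ e, x v)

/-- The H-eigenvector equation for the signless Laplacian tensor: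
`(λ - d(v)) x_v^{k-1} = ∑_{e ∋ v} ∏_{w ∈ e \ {v}} x_w` for every vertex `v`. -/
def eigenEq (G : UHG V k) (lam : ℝ) (x : V → ℝ) : Prop :=
  ∀ v : V, (lam - (G.deg v : ℝ)) * x v ^ (k - 1) =
    ∑ e ∈ G.incEdges v, ∏ w ∈ e.erase v, x w

/-- The least H-eigenvalue of the signless Laplacian tensor. -/
noncomputable def lamMin (G : UHG V k) : ℝ :=
  sInf {lam : ℝ | ∃ x : V → ℝ, x ≠ 0 ∧ G.eigenEq lam x}

/-- A first eigenvector: an H-eigenvector associated with the least H-eigenvalue. -/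
def IsFirstEigenvector (G : UHG V k) (x : V → ℝ) : Prop :=
  x ≠ 0 ∧ G.eigenEq G.lamMin x

/-- `G` is the coalescence `G₀(u) ⋄ H(u)`: its edges are the disjoint union of the
edges of `G₀` and `H`, which share only the vertex `u`. -/
def IsCoalescence (G G₀ H : UHG V k) (u : V) : Prop :=
  G.edges = G₀.edges ∪ H.edges ∧ Disjoint G₀.edges H.edges ∧
  G₀.verts ∩ H.verts ⊆ {u} ∧ u ∈ G₀.verts ∧ u ∈ H.verts

end UHG

namespace UHG

variable {V : Type} [DecidableEq V] [Fintype V] {k : ℕ}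

lemma mem_verts_of_mem {G : UHG V k} {e : Finset V} {v : V} (he : e ∈ G.edges) (hv : v ∈ e) :
    v ∈ G.verts :=
  Finset.mem_biUnion.2 ⟨e, he, hv⟩

lemma swap_sum (E : Finset (Finset V)) (A : Finset V) (g : V → Finset V → ℝ) :
    ∑ v ∈ A, ∑ e ∈ E.filter (fun e => v ∈ e), g v e = ∑ e ∈ E, ∑ v ∈ A ∩ e, g v e := by
  simp_rw [Finset.sum_filter]
  rw [Finset.sum_comm]
  refine Finset.sum_congr rfl fun e _ => ?_
  rw [← Finset.filter_mem_eq_inter, ← Finset.sum_filter]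

lemma sum_eigen (G : UHG V k) (hk0 : 0 < k) {lam : ℝ} {x : V → ℝ} (h : G.eigenEq lam x)
    (A : Finset V) :
    lam * ∑ v ∈ A, x v ^ k =
      ∑ e ∈ G.edges, ((∑ v ∈ A ∩ e, x v ^ k) + ((A ∩ e).card : ℝ) * ∏ w ∈ e, x w) := by
  have key : ∀ v ∈ A, lam * x v ^ k
      = ∑ e ∈ G.edges.filter (fun e => v ∈ e), (x v ^ k + ∏ w ∈ e, x w) := by
    intro v _
    have h1 := h v
    have hpow : x v ^ (k - 1) * x v = x v ^ k := by
      rw [← pow_succ, Nat.sub_add_cancel hk0]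
    have h2 : (lam - (G.deg v : ℝ)) * x v ^ k
        = ∑ e ∈ G.incEdges v, ∏ w ∈ e, x w := by
      calc (lam - (G.deg v : ℝ)) * x v ^ k
          = ((lam - (G.deg v : ℝ)) * x v ^ (k - 1)) * x v := by rw [mul_assoc, hpow]
        _ = (∑ e ∈ G.incEdges v, ∏ w ∈ e.erase v, x w) * x v := by rw [h1]
        _ = ∑ e ∈ G.incEdges v, (∏ w ∈ e.erase v, x w) * x v := Finset.sum_mul _ _ _
        _ = ∑ e ∈ G.incEdges v, ∏ w ∈ e, x w := by
            refine Finset.sum_congr rfl fun e he => ?_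
            have hve : v ∈ e := by
              have := he; simp only [incEdges, Finset.mem_filter] at this; exact this.2
            exact Finset.prod_erase_mul _ _ hve
    have hdeg : (G.deg v : ℝ) * x v ^ k = ∑ e ∈ G.incEdges v, x v ^ k := by
      rw [Finset.sum_const, nsmul_eq_mul]; rfl
    have h3 : lam * x v ^ k
        = (∑ e ∈ G.incEdges v, x v ^ k) + ∑ e ∈ G.incEdges v, ∏ w ∈ e, x w := by
      rw [← hdeg]; linarith [h2]
    rw [h3, ← Finset.sum_add_distrib]
    rfl
  rw [Finset.mul_sum, Finset.sum_congr rfl key, swap_sum]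
  refine Finset.sum_congr rfl fun e _ => ?_
  rw [Finset.sum_add_distrib, Finset.sum_const, nsmul_eq_mul]

lemma edge_nonneg (hk : Even k) (hk0 : 0 < k) (x : V → ℝ) {e : Finset V} (hcard : e.card = k) :
    0 ≤ (∑ v ∈ e, x v ^ k) + (k : ℝ) * ∏ v ∈ e, x v := by
  have hkR : (k : ℝ) ≠ 0 := Nat.cast_ne_zero.2 hk0.ne'
  have hkpos : (0:ℝ) < (k:ℝ) := Nat.cast_pos.2 hk0
  have hAM := Real.geom_mean_le_arith_mean_weighted e (fun _ => (k:ℝ)⁻¹) (fun v => x v ^ k)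
    (fun _ _ => by positivity)
    (by rw [Finset.sum_const, hcard, nsmul_eq_mul, mul_inv_cancel₀ hkR])
    (fun v _ => hk.pow_nonneg _)
  have hL : ∀ v ∈ e, (x v ^ k : ℝ) ^ ((k:ℝ)⁻¹) = |x v| := by
    intro v _
    rw [← hk.pow_abs, ← Real.rpow_natCast |x v| k, ← Real.rpow_mul (abs_nonneg _),
      mul_inv_cancel₀ hkR, Real.rpow_one]
  rw [Finset.prod_congr rfl hL] at hAM
  have h2 : ∑ v ∈ e, (k:ℝ)⁻¹ * x v ^ k = (k:ℝ)⁻¹ * ∑ v ∈ e, x v ^ k := by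
    rw [Finset.mul_sum]
  rw [h2] at hAM
  have h3 : (k:ℝ) * ∏ v ∈ e, |x v| ≤ ∑ v ∈ e, x v ^ k := by
    calc (k:ℝ) * ∏ v ∈ e, |x v| ≤ (k:ℝ) * ((k:ℝ)⁻¹ * ∑ v ∈ e, x v ^ k) :=
          mul_le_mul_of_nonneg_left hAM (le_of_lt hkpos)
      _ = ∑ v ∈ e, x v ^ k := by field_simp
  have h4 : -((k:ℝ) * ∏ v ∈ e, x v) ≤ (k:ℝ) * ∏ v ∈ e, |x v| := by
    rw [← Finset.abs_prod]
    nlinarith [neg_le_abs (∏ v ∈ e, x v)]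
  linarith

lemma Qform_nonneg (G : UHG V k) (hk : Even k) (hk0 : 0 < k) (x : V → ℝ) : 0 ≤ G.Qform x :=
  Finset.sum_nonneg fun e he => edge_nonneg hk hk0 x (G.uniform e he)

lemma sumpow_pos (hk : Even k) {x : V → ℝ} (hx : x ≠ 0) : 0 < ∑ v : V, x v ^ k := by
  obtain ⟨v, hv⟩ := Function.ne_iff.1 hx
  exact Finset.sum_pos' (fun w _ => hk.pow_nonneg _) ⟨v, Finset.mem_univ v, hk.pow_pos hv⟩

lemma eigen_qform (G : UHG V k) (hk0 : 0 < k) {lam : ℝ} {x : V → ℝ} (h : G.eigenEq lam x) :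
    lam * ∑ v : V, x v ^ k = G.Qform x := by
  rw [sum_eigen G hk0 h Finset.univ]
  refine Finset.sum_congr rfl fun e he => ?_
  rw [Finset.univ_inter, G.uniform e he]

lemma eigen_nonneg (G : UHG V k) (hk : Even k) (hk0 : 0 < k) {lam : ℝ} {x : V → ℝ}
    (hx : x ≠ 0) (h : G.eigenEq lam x) : 0 ≤ lam := by
  have h1 := eigen_qform G hk0 h
  have h2 := Qform_nonneg G hk hk0 x
  have h3 := sumpow_pos hk hx
  nlinarith

lemma Qform_smul (G : UHG V k) (t : ℝ) (y : V → ℝ) :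
    G.Qform (fun v => t * y v) = t ^ k * G.Qform y := by
  rw [Qform, Qform, Finset.mul_sum]
  refine Finset.sum_congr rfl fun e he => ?_
  have hcard := G.uniform e he
  simp only [mul_pow, Finset.prod_mul_distrib, Finset.prod_const, hcard, ← Finset.mul_sum]
  ring

lemma eval_single (s : Finset V) (c : V → ℝ) (v : V) :
    (∑ w ∈ s, c w • ContinuousLinearMap.proj (R := ℝ) (φ := fun _ : V => ℝ) w) (Pi.single v 1)
      = if v ∈ s then c v else 0 := by
  rw [ContinuousLinearMap.sum_apply]
  have h : ∀ w ∈ s,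
      (c w • ContinuousLinearMap.proj (R := ℝ) (φ := fun _ : V => ℝ) w) (Pi.single v 1)
      = if w = v then c w else 0 := by
    intro w _
    rw [ContinuousLinearMap.smul_apply, ContinuousLinearMap.proj_apply, Pi.single_apply]
    by_cases hwv : w = v <;> simp [hwv]
  rw [Finset.sum_congr rfl h, Finset.sum_ite_eq' s v c]

lemma allEq {α : Type*} (s : Finset α) (t : α → ℝ) (M : ℝ)
    (h1 : ∀ i ∈ s, t i ≤ M) (h2 : ∑ i ∈ s, t i = s.card * M) : ∀ i ∈ s, t i = M := by
  have h3 : ∑ i ∈ s, (M - t i) = 0 := by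
    rw [Finset.sum_sub_distrib, Finset.sum_const, nsmul_eq_mul, h2]; ring
  intro i hi
  have h4 := (Finset.sum_eq_zero_iff_of_nonneg (fun j hj => sub_nonneg.2 (h1 j hj))).1 h3 i hi
  linarith

lemma prodc (s : Finset V) (f : V → ℝ) (c : ℝ) (hc : 0 < c)
    (h0 : ∀ i ∈ s, 0 ≤ f i) (h1 : ∀ i ∈ s, f i ≤ c) (hp : ∏ i ∈ s, f i = c ^ s.card) :
    ∀ i ∈ s, f i = c := by
  intro i hi
  by_contra hne
  have hlt : f i < c := lt_of_le_of_ne (h1 i hi) hne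
  have he1 : ∏ j ∈ s.erase i, f j ≤ c ^ (s.erase i).card :=
    calc ∏ j ∈ s.erase i, f j ≤ ∏ j ∈ s.erase i, c :=
          Finset.prod_le_prod (fun j hj => h0 j (Finset.mem_of_mem_erase hj))
            (fun j hj => h1 j (Finset.mem_of_mem_erase hj))
      _ = c ^ (s.erase i).card := Finset.prod_const c
  have hcp : (0:ℝ) < c ^ (s.erase i).card := pow_pos hc _
  have hlt2 : ∏ j ∈ s, f j < c ^ s.card := by
    rw [← Finset.mul_prod_erase s f hi]
    calc f i * ∏ j ∈ s.erase i, f j ≤ f i * c ^ (s.erase i).card :=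
          mul_le_mul_of_nonneg_left he1 (h0 i hi)
      _ < c * c ^ (s.erase i).card := mul_lt_mul_of_pos_right hlt hcp
      _ = c ^ s.card := by rw [← pow_succ', Finset.card_erase_add_one hi]
  exact absurd hp (ne_of_lt hlt2)

lemma lamMin_le_rayleigh (G : UHG V k) (hk : Even k) (hk0 : 0 < k) (y : V → ℝ)
    (hy : (∑ v : V, y v ^ k) ≠ 0) :
    G.lamMin * ∑ v : V, y v ^ k ≤ G.Qform y := by
  classical
  have hk2 : 2 ≤ k := by obtain ⟨m, rfl⟩ := hk; omega
  have hk1 : k - 1 ≠ 0 := by omega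
  have hkR : (k:ℝ) ≠ 0 := Nat.cast_ne_zero.2 hk0.ne'
  have hS0 : 0 ≤ ∑ v : V, y v ^ k := Finset.sum_nonneg fun v _ => hk.pow_nonneg _
  have hS : 0 < ∑ v : V, y v ^ k := lt_of_le_of_ne hS0 (Ne.symm hy)
  set g : (V → ℝ) → ℝ := fun z => ∑ v : V, z v ^ k with hgdef
  have hgcont : Continuous g := continuous_finset_sum _ fun v _ => (continuous_apply v).pow k
  have hfcont : Continuous G.Qform := by
    apply continuous_finset_sum
    intro e _
    exact (continuous_finset_sum e fun v _ => (continuous_apply v).pow k).add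
      (continuous_const.mul (continuous_finset_prod e fun v _ => continuous_apply v))
  obtain ⟨v₀, -⟩ := Finset.nonempty_of_sum_ne_zero hy
  have hclosed : IsClosed {z : V → ℝ | g z = 1} := isClosed_eq hgcont continuous_const
  have hsub : {z : V → ℝ | g z = 1} ⊆ Metric.closedBall 0 1 := by
    intro z hz
    rw [Metric.mem_closedBall, dist_zero_right]
    refine (pi_norm_le_iff_of_nonneg zero_le_one).2 fun v => ?_
    have h1 : z v ^ k ≤ 1 := by
      have h2 := Finset.single_le_sum (f := fun w => z w ^ k)
        (fun w _ => hk.pow_nonneg (z w)) (Finset.mem_univ v)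
      calc z v ^ k ≤ ∑ w : V, z w ^ k := h2
        _ = 1 := hz
    have h3 : |z v| ^ k ≤ 1 := by rw [hk.pow_abs]; exact h1
    rw [Real.norm_eq_abs]
    exact (pow_le_one_iff_of_nonneg (abs_nonneg _) hk0.ne').1 h3
  have hcomp : IsCompact {z : V → ℝ | g z = 1} :=
    (isCompact_closedBall (0 : V → ℝ) 1).of_isClosed_subset hclosed hsub
  set z₀ : V → ℝ := Pi.single v₀ 1 with hz₀def
  have hone : g z₀ = 1 := by
    show (∑ v : V, z₀ v ^ k) = 1
    have h : ∀ v ∈ Finset.univ, z₀ v ^ k = if v = v₀ then (1:ℝ) else 0 := by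
      intro v _
      rcases eq_or_ne v v₀ with rfl | hv
      · simp [hz₀def]
      · simp [hz₀def, Pi.single_apply, hv, zero_pow hk0.ne']
    rw [Finset.sum_congr rfl h, Finset.sum_ite_eq' Finset.univ v₀ fun _ => (1:ℝ)]
    simp
  have hne : {z : V → ℝ | g z = 1}.Nonempty := ⟨z₀, hone⟩
  obtain ⟨z, hzmem, hzmin⟩ := hcomp.exists_isMinOn hne hfcont.continuousOn
  have hgz : g z = 1 := hzmem
  have hpowd : ∀ v : V, HasStrictFDerivAt (fun zz : V → ℝ => zz v ^ k)
      (((k:ℝ) * z v ^ (k - 1)) • ContinuousLinearMap.proj (R := ℝ) (φ := fun _ : V => ℝ) v) z := by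
    intro v
    have hproj : HasStrictFDerivAt (fun zz : V → ℝ => zz v)
        (ContinuousLinearMap.proj (R := ℝ) (φ := fun _ : V => ℝ) v) z :=
      (ContinuousLinearMap.proj (R := ℝ) (φ := fun _ : V => ℝ) v).hasStrictFDerivAt
    exact (hasStrictDerivAt_pow k (z v)).comp_hasStrictFDerivAt z hproj
  have hgd : HasStrictFDerivAt g
      (∑ v : V, ((k:ℝ) * z v ^ (k - 1)) •
        ContinuousLinearMap.proj (R := ℝ) (φ := fun _ : V => ℝ) v) z :=
    HasStrictFDerivAt.fun_sum fun v _ => hpowd v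
  have hfd : HasStrictFDerivAt G.Qform
      (∑ e ∈ G.edges,
        ((∑ v ∈ e, ((k:ℝ) * z v ^ (k - 1)) •
            ContinuousLinearMap.proj (R := ℝ) (φ := fun _ : V => ℝ) v)
          + (k:ℝ) • ∑ w ∈ e, (∏ j ∈ e.erase w, z j) •
            ContinuousLinearMap.proj (R := ℝ) (φ := fun _ : V => ℝ) w)) z := by
    apply HasStrictFDerivAt.fun_sum
    intro e _
    have hproj : ∀ i : V, HasStrictFDerivAt (fun zz : V → ℝ => zz i)
        (ContinuousLinearMap.proj (R := ℝ) (φ := fun _ : V => ℝ) i) z :=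
      fun i => (ContinuousLinearMap.proj (R := ℝ) (φ := fun _ : V => ℝ) i).hasStrictFDerivAt
    exact (HasStrictFDerivAt.fun_sum fun v _ => hpowd v).add
      ((HasStrictFDerivAt.finset_prod fun i _ => hproj i).const_mul (k:ℝ))
  have hextr : IsLocalExtrOn G.Qform {zz : V → ℝ | g zz = g z} z := by
    rw [hgz]
    exact Or.inl hzmin.localize
  obtain ⟨a, b, hab, hmul⟩ := hextr.exists_multipliers_of_hasStrictFDerivAt_1d hgd hfd
  have hcoord : ∀ v : V,
      a * ((k:ℝ) * z v ^ (k - 1))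
      + b * ((G.deg v : ℝ) * ((k:ℝ) * z v ^ (k - 1))
          + (k:ℝ) * ∑ e ∈ G.incEdges v, ∏ j ∈ e.erase v, z j) = 0 := by
    intro v
    have h1 := congrFun (congrArg DFunLike.coe hmul) (Pi.single v 1)
    rw [ContinuousLinearMap.add_apply, ContinuousLinearMap.smul_apply,
      ContinuousLinearMap.smul_apply, ContinuousLinearMap.zero_apply] at h1
    have hga : (∑ v : V, ((k:ℝ) * z v ^ (k - 1)) •
        ContinuousLinearMap.proj (R := ℝ) (φ := fun _ : V => ℝ) v) (Pi.single v 1)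
        = (k:ℝ) * z v ^ (k - 1) := by
      rw [eval_single Finset.univ (fun w => (k:ℝ) * z w ^ (k - 1)) v,
        if_pos (Finset.mem_univ v)]
    have hfa : (∑ e ∈ G.edges,
        ((∑ w ∈ e, ((k:ℝ) * z w ^ (k - 1)) •
            ContinuousLinearMap.proj (R := ℝ) (φ := fun _ : V => ℝ) w)
          + (k:ℝ) • ∑ w ∈ e, (∏ j ∈ e.erase w, z j) •
            ContinuousLinearMap.proj (R := ℝ) (φ := fun _ : V => ℝ) w)) (Pi.single v 1)
        = (G.deg v : ℝ) * ((k:ℝ) * z v ^ (k - 1))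
          + (k:ℝ) * ∑ e ∈ G.incEdges v, ∏ j ∈ e.erase v, z j := by
      rw [ContinuousLinearMap.sum_apply]
      have h2 : ∀ e ∈ G.edges,
          ((∑ w ∈ e, ((k:ℝ) * z w ^ (k - 1)) •
              ContinuousLinearMap.proj (R := ℝ) (φ := fun _ : V => ℝ) w)
            + (k:ℝ) • ∑ w ∈ e, (∏ j ∈ e.erase w, z j) •
              ContinuousLinearMap.proj (R := ℝ) (φ := fun _ : V => ℝ) w) (Pi.single v 1)
          = (if v ∈ e then (k:ℝ) * z v ^ (k - 1) else 0)
            + (if v ∈ e then (k:ℝ) * ∏ j ∈ e.erase v, z j else 0) := by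
        intro e _
        rw [ContinuousLinearMap.add_apply, ContinuousLinearMap.smul_apply,
          eval_single, eval_single]
        by_cases hve : v ∈ e <;> simp [hve]
      rw [Finset.sum_congr rfl h2, Finset.sum_add_distrib, ← Finset.sum_filter,
        ← Finset.sum_filter, Finset.sum_const, nsmul_eq_mul, Finset.mul_sum]
      rfl
    rw [hga, hfa] at h1
    rw [smul_eq_mul, smul_eq_mul] at h1
    linarith [h1]
  have hbne : b ≠ 0 := by
    intro hb0
    have haz : a ≠ 0 := by
      intro ha0
      exact hab (by rw [ha0, hb0]; rfl)
    have hz0 : z = 0 := by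
      funext v
      have h1 := hcoord v
      rw [hb0, zero_mul, add_zero] at h1
      have h2 : z v ^ (k - 1) = 0 := by
        rcases mul_eq_zero.1 h1 with h | h
        · exact absurd h haz
        · rcases mul_eq_zero.1 h with h' | h'
          · exact absurd h' hkR
          · exact h'
      exact pow_eq_zero_iff hk1 |>.1 h2
    rw [hz0] at hgz
    simp only [hgdef, Pi.zero_apply, zero_pow hk0.ne', Finset.sum_const_zero] at hgz
    exact zero_ne_one hgz
  set lam : ℝ := -a / b with hlam
  have heigz : G.eigenEq lam z := by
    intro v
    have h1 := hcoord v
    have h3 : a * z v ^ (k - 1) + b * ((G.deg v : ℝ) * z v ^ (k - 1))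
        + b * ∑ e ∈ G.incEdges v, ∏ j ∈ e.erase v, z j = 0 := by
      apply mul_left_cancel₀ hkR
      rw [mul_zero]
      linear_combination h1
    have h4 : b * ((lam - (G.deg v : ℝ)) * z v ^ (k - 1))
        = b * ∑ e ∈ G.incEdges v, ∏ j ∈ e.erase v, z j := by
      rw [hlam]
      field_simp
      linear_combination -h3
    exact mul_left_cancel₀ hbne h4
  have hz0 : z ≠ 0 := by
    intro h0
    rw [h0] at hgz
    simp only [hgdef, Pi.zero_apply, zero_pow hk0.ne', Finset.sum_const_zero] at hgz
    exact zero_ne_one hgz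
  have hbdd : BddBelow {l : ℝ | ∃ x : V → ℝ, x ≠ 0 ∧ G.eigenEq l x} := by
    refine ⟨0, fun l hl => ?_⟩
    obtain ⟨w, hw0, hwe⟩ := hl
    exact eigen_nonneg G hk hk0 hw0 hwe
  have hmle : G.lamMin ≤ lam := csInf_le hbdd ⟨z, hz0, heigz⟩
  have hlamQ : lam = G.Qform z := by
    have h5 := eigen_qform G hk0 heigz
    rw [show (∑ v : V, z v ^ k) = 1 from hgz, mul_one] at h5
    exact h5
  set c : ℝ := (∑ v : V, y v ^ k) ^ ((k:ℝ)⁻¹) with hc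
  have hcpos : 0 < c := Real.rpow_pos_of_pos hS _
  have hck : c ^ k = ∑ v : V, y v ^ k := by
    rw [hc, ← Real.rpow_natCast ((∑ v : V, y v ^ k) ^ ((k:ℝ)⁻¹)) k,
      ← Real.rpow_mul hS.le, inv_mul_cancel₀ hkR, Real.rpow_one]
  have hyg : g (fun v => c⁻¹ * y v) = 1 := by
    show (∑ v : V, (c⁻¹ * y v) ^ k) = 1
    simp_rw [mul_pow]
    rw [← Finset.mul_sum, inv_pow, hck, inv_mul_cancel₀ hy]
  have hmin2 : G.Qform z ≤ G.Qform (fun v => c⁻¹ * y v) := hzmin hyg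
  have hQc : G.Qform (fun v => c⁻¹ * y v) = (c⁻¹) ^ k * G.Qform y := Qform_smul G _ y
  have hfinal : lam * ∑ v : V, y v ^ k ≤ G.Qform y := by
    have h5 : lam ≤ (c⁻¹) ^ k * G.Qform y := by
      rw [hlamQ]; exact le_trans hmin2 (le_of_eq hQc)
    have h6 : (c⁻¹) ^ k = (∑ v : V, y v ^ k)⁻¹ := by rw [inv_pow, hck]
    rw [h6] at h5
    calc lam * ∑ v : V, y v ^ k
        ≤ (∑ v : V, y v ^ k)⁻¹ * G.Qform y * ∑ v : V, y v ^ k :=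
          mul_le_mul_of_nonneg_right h5 hS0
      _ = G.Qform y := by field_simp
  calc G.lamMin * ∑ v : V, y v ^ k ≤ lam * ∑ v : V, y v ^ k :=
        mul_le_mul_of_nonneg_right hmle hS0
    _ ≤ G.Qform y := hfinal

lemma lam_zero_oddBipartite (G : UHG V k) (hk : Even k) (hk0 : 0 < k)
    (hconn : G.Connected) {x : V → ℝ} (heig : G.eigenEq 0 x)
    {u : V} (hu : u ∈ G.verts) (hxu : x u ≠ 0) : G.OddBipartite := by
  classical
  obtain ⟨hvne, hpath⟩ := hconn
  obtain ⟨vm, hvm, hmax⟩ := Finset.exists_max_image G.verts (fun v => |x v|) hvne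
  set c : ℝ := |x vm| with hcdef
  have hc0 : 0 < c := lt_of_lt_of_le (abs_pos.2 hxu) (hmax u hu)
  have step : ∀ v ∈ G.verts, |x v| = c → ∀ e ∈ G.edges, v ∈ e →
      (∀ w ∈ e, |x w| = c) ∧ ∏ w ∈ e, x w = -(c ^ k) := by
    intro v hv hvc
    have hbound : ∀ e ∈ G.incEdges v, |∏ w ∈ e.erase v, x w| ≤ c ^ (k - 1) := by
      intro e he
      have heE : e ∈ G.edges := (Finset.mem_filter.1 he).1
      have hveE : v ∈ e := (Finset.mem_filter.1 he).2
      rw [Finset.abs_prod]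
      calc ∏ w ∈ e.erase v, |x w| ≤ ∏ w ∈ e.erase v, c :=
            Finset.prod_le_prod (fun w _ => abs_nonneg _)
              (fun w hw => hmax w (mem_verts_of_mem heE (Finset.mem_of_mem_erase hw)))
        _ = c ^ (e.erase v).card := Finset.prod_const c
        _ = c ^ (k - 1) := by rw [Finset.card_erase_of_mem hveE, G.uniform e heE]
    have heq := heig v
    have habs : |x v ^ (k - 1)| = c ^ (k - 1) := by rw [abs_pow, hvc]
    have hall : ∀ e ∈ G.incEdges v, (∏ w ∈ e.erase v, x w) = -(x v ^ (k - 1)) := by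
      have hsum : ∑ e ∈ G.incEdges v, ∏ w ∈ e.erase v, x w
          = -((G.deg v : ℝ) * x v ^ (k - 1)) := by
        rw [← heq]; ring
      rcases (abs_eq (pow_nonneg hc0.le _)).1 habs with hp | hp
      · intro e he
        have h5 := allEq (G.incEdges v) (fun e => -(∏ w ∈ e.erase v, x w)) (c ^ (k - 1))
          (fun e he' => le_trans (neg_le_abs _) (hbound e he'))
          (by rw [Finset.sum_neg_distrib, hsum, hp]; push_cast [deg]; ring) e he
        rw [hp]
        linarith [h5]
      · intro e he
        have h5 := allEq (G.incEdges v) (fun e => ∏ w ∈ e.erase v, x w) (c ^ (k - 1))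
          (fun e he' => le_trans (le_abs_self _) (hbound e he'))
          (by rw [hsum, hp]; push_cast [deg]; ring) e he
        rw [hp, neg_neg]
        exact h5
    intro e heE hve
    have heInc : e ∈ G.incEdges v := Finset.mem_filter.2 ⟨heE, hve⟩
    have ht := hall e heInc
    have habs2 : ∏ w ∈ e.erase v, |x w| = c ^ (e.erase v).card := by
      rw [← Finset.abs_prod, ht, abs_neg, habs, Finset.card_erase_of_mem hve,
        G.uniform e heE]
    have hallc : ∀ w ∈ e.erase v, |x w| = c :=
      prodc (e.erase v) (fun w => |x w|) c hc0 (fun w _ => abs_nonneg _)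
        (fun w hw => hmax w (mem_verts_of_mem heE (Finset.mem_of_mem_erase hw))) habs2
    have hwall : ∀ w ∈ e, |x w| = c := by
      intro w hw
      rcases eq_or_ne w v with rfl | hwv
      · exact hvc
      · exact hallc w (Finset.mem_erase.2 ⟨hwv, hw⟩)
    refine ⟨hwall, ?_⟩
    have hpowmul : x v * x v ^ (k - 1) = x v ^ k := by
      rw [← pow_succ', Nat.sub_add_cancel hk0]
    have hxvk : x v ^ k = c ^ k := by
      rw [← hk.pow_abs, hvc]
    rw [← Finset.mul_prod_erase e x hve, ht]
    rw [← hxvk, ← hpowmul]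
    ring
  have hprop : ∀ v, Relation.ReflTransGen G.Adj vm v → v ∈ G.verts ∧ |x v| = c := by
    intro v h
    induction h with
    | refl => exact ⟨hvm, rfl⟩
    | tail hab hbc ih =>
      obtain ⟨e, heE, hbe, hce⟩ := hbc
      have h1 := step _ ih.1 ih.2 e heE hbe
      exact ⟨mem_verts_of_mem heE hce, h1.1 _ hce⟩
  have hallv : ∀ v ∈ G.verts, |x v| = c := fun v hv => (hprop v (hpath vm hvm v hv)).2
  refine ⟨Finset.univ.filter (fun v => x v < 0), ?_⟩
  intro e heE
  have hecard : e.card = k := G.uniform e heE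
  have hene : e.Nonempty := Finset.card_pos.1 (by rw [hecard]; exact hk0)
  obtain ⟨w, hw⟩ := hene
  have hwv : w ∈ G.verts := mem_verts_of_mem heE hw
  have h1 := step w hwv (hallv w hwv) e heE hw
  have hsign : ∀ v ∈ e, x v = (if x v < 0 then (-1:ℝ) else 1) * |x v| := by
    intro v _
    rcases lt_or_ge (x v) 0 with h | h
    · rw [if_pos h, abs_of_neg h]; ring
    · rw [if_neg (not_lt.2 h), abs_of_nonneg h]; ring
  have h2 : ∏ v ∈ e, x v
      = (∏ v ∈ e, (if x v < 0 then (-1:ℝ) else 1)) * ∏ v ∈ e, |x v| := by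
    rw [← Finset.prod_mul_distrib]; exact Finset.prod_congr rfl hsign
  have h3 : ∏ v ∈ e, |x v| = c ^ k := by
    rw [Finset.prod_congr rfl (fun v hv => h1.1 v hv), Finset.prod_const, hecard]
  have h4 : ∏ v ∈ e, (if x v < 0 then (-1:ℝ) else 1)
      = (-1:ℝ) ^ (e ∩ Finset.univ.filter (fun v => x v < 0)).card := by
    rw [Finset.prod_ite, Finset.prod_const, Finset.prod_const, one_pow, mul_one]
    congr 2
    ext v; simp [Finset.mem_inter, Finset.mem_filter]
  have h5 : (-1:ℝ) ^ (e ∩ Finset.univ.filter (fun v => x v < 0)).card * c ^ k = -(c ^ k) := by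
    calc (-1:ℝ) ^ (e ∩ Finset.univ.filter (fun v => x v < 0)).card * c ^ k
        = (∏ v ∈ e, (if x v < 0 then (-1:ℝ) else 1)) * ∏ v ∈ e, |x v| := by rw [h4, h3]
      _ = ∏ v ∈ e, x v := h2.symm
      _ = -(c ^ k) := h1.2
  have hckpos : (0:ℝ) < c ^ k := pow_pos hc0 k
  rcases Nat.even_or_odd (e ∩ Finset.univ.filter (fun v => x v < 0)).card with hev | hod
  · exfalso
    rw [hev.neg_one_pow, one_mul] at h5
    linarith
  · exact hod

end UHG


/-- Let `G = G₀(u) ⋄ H(u)` be a connected non-odd-bipartite `k`-uniform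
hypergraph (`k` even) with `H` odd-bipartite, and let `x` be a first eigenvector of `G`.
With `β_H(x) = d_H(u) x_u^k + ∑_{e ∈ E_H(u)} ∏_{v ∈ e} x_v`, we have `β_H(x) ≤ 0`;
moreover if `x_u ≠ 0` then `β_H(x) < 0`. -/
theorem stmt13 {V : Type} [DecidableEq V] [Fintype V] {k : ℕ}
    (hk : Even k) (hk0 : 0 < k) (G G₀ H : UHG V k) (u : V)
    (hcoal : UHG.IsCoalescence G G₀ H u) (hH : H.OddBipartite)
    (hconn : G.Connected) (hnob : ¬ G.OddBipartite)
    (x : V → ℝ) (hx : G.IsFirstEigenvector x) :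
    (H.deg u : ℝ) * x u ^ k + (∑ e ∈ H.incEdges u, ∏ v ∈ e, x v) ≤ 0 ∧
      (x u ≠ 0 → (H.deg u : ℝ) * x u ^ k + (∑ e ∈ H.incEdges u, ∏ v ∈ e, x v) < 0) := by
  classical
  obtain ⟨hE, hdisj, hsub, huG0, huH⟩ := hcoal
  obtain ⟨hx0, heig⟩ := hx
  by_cases hxu : x u = 0
  · have h1 : (H.deg u : ℝ) * x u ^ k = 0 := by rw [hxu, zero_pow hk0.ne', mul_zero]
    have h2 : ∑ e ∈ H.incEdges u, ∏ v ∈ e, x v = 0 := by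
      refine Finset.sum_eq_zero fun e he => ?_
      exact Finset.prod_eq_zero (Finset.mem_filter.1 he).2 hxu
    constructor
    · rw [h1, h2]; norm_num
    · intro h; exact absurd hxu h
  · have hG0sub : G₀.edges ⊆ G.edges := by rw [hE]; exact Finset.subset_union_left
    have hG0verts : G₀.verts ⊆ G.verts := by
      intro v hv
      obtain ⟨e, he, hve⟩ := Finset.mem_biUnion.1 hv
      exact UHG.mem_verts_of_mem (hG0sub he) hve
    have huGv : u ∈ G.verts := hG0verts huG0
    set lam := G.lamMin with hlamdef
    have hlam0 : 0 ≤ lam := UHG.eigen_nonneg G hk hk0 hx0 heig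
    have hlamne : lam ≠ 0 := by
      intro h0
      exact hnob (UHG.lam_zero_oddBipartite G hk hk0 hconn (h0 ▸ heig) huGv hxu)
    have hlampos : 0 < lam := lt_of_le_of_ne hlam0 (Ne.symm hlamne)
    set S := ∑ v ∈ G₀.verts, x v ^ k with hSdef
    have hid := UHG.sum_eigen G hk0 heig G₀.verts
    rw [hE, Finset.sum_union hdisj] at hid
    have hG0part : ∑ e ∈ G₀.edges,
        ((∑ v ∈ G₀.verts ∩ e, x v ^ k) + ((G₀.verts ∩ e).card : ℝ) * ∏ w ∈ e, x w)
        = G₀.Qform x := by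
      refine Finset.sum_congr rfl fun e he => ?_
      have hsube : e ⊆ G₀.verts := fun v hv => Finset.mem_biUnion.2 ⟨e, he, hv⟩
      rw [Finset.inter_eq_right.2 hsube, G₀.uniform e he]
    have hHpart : ∑ e ∈ H.edges,
        ((∑ v ∈ G₀.verts ∩ e, x v ^ k) + ((G₀.verts ∩ e).card : ℝ) * ∏ w ∈ e, x w)
        = (H.deg u : ℝ) * x u ^ k + ∑ e ∈ H.incEdges u, ∏ v ∈ e, x v := by
      have hcase : ∀ e ∈ H.edges, G₀.verts ∩ e = if u ∈ e then {u} else ∅ := by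
        intro e he
        have hsube : ∀ v ∈ G₀.verts ∩ e, v = u := by
          intro v hv
          obtain ⟨hv1, hv2⟩ := Finset.mem_inter.1 hv
          exact Finset.mem_singleton.1
            (hsub (Finset.mem_inter.2 ⟨hv1, UHG.mem_verts_of_mem he hv2⟩))
        by_cases hue : u ∈ e
        · rw [if_pos hue]
          apply Finset.Subset.antisymm
          · intro v hv; exact Finset.mem_singleton.2 (hsube v hv)
          · intro v hv
            rw [Finset.mem_singleton.1 hv]
            exact Finset.mem_inter.2 ⟨huG0, hue⟩
        · rw [if_neg hue, Finset.eq_empty_iff_forall_notMem]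
          intro v hv
          exact hue ((hsube v hv) ▸ (Finset.mem_inter.1 hv).2)
      have hstep1 : ∑ e ∈ H.edges,
          ((∑ v ∈ G₀.verts ∩ e, x v ^ k) + ((G₀.verts ∩ e).card : ℝ) * ∏ w ∈ e, x w)
          = ∑ e ∈ H.edges, (if u ∈ e then x u ^ k + ∏ w ∈ e, x w else 0) := by
        refine Finset.sum_congr rfl fun e he => ?_
        rw [hcase e he]
        by_cases hue : u ∈ e
        · simp [hue]
        · simp [hue]
      rw [hstep1, ← Finset.sum_filter]
      have hfil : H.edges.filter (fun e => u ∈ e) = H.incEdges u := rfl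
      rw [hfil, Finset.sum_add_distrib, Finset.sum_const, nsmul_eq_mul]
      rfl
    rw [hG0part, hHpart] at hid
    obtain ⟨U, hU⟩ := hH
    set sgn : V → ℝ := fun v => if v ∈ U then (-1:ℝ) else 1 with hsgn
    set c₀ : ℝ := (if x u < 0 then (-1:ℝ) else 1) * sgn u with hc₀
    set σ : V → ℝ := fun v => c₀ * sgn v with hσ
    have hsgn1 : ∀ v, sgn v = 1 ∨ sgn v = -1 := by
      intro v
      by_cases h : v ∈ U
      · right; simp [hsgn, h]
      · left; simp [hsgn, h]
    have hc₀1 : c₀ = 1 ∨ c₀ = -1 := by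
      rw [hc₀]
      rcases hsgn1 u with h | h <;> rw [h] <;> by_cases h2 : x u < 0 <;>
        simp [h2]
    have hσ1 : ∀ v, σ v = 1 ∨ σ v = -1 := by
      intro v
      simp only [hσ]
      rcases hc₀1 with h | h <;> rcases hsgn1 v with h2 | h2 <;> rw [h, h2] <;> norm_num
    have hσk : ∀ v, σ v ^ k = 1 := by
      intro v
      rcases hσ1 v with h | h <;> rw [h]
      · exact one_pow k
      · exact hk.neg_one_pow
    have hσu : σ u * |x u| = x u := by
      have hs2 : sgn u * sgn u = 1 := by rcases hsgn1 u with h | h <;> rw [h] <;> norm_num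
      have hσueq : σ u = if x u < 0 then (-1:ℝ) else 1 := by
        simp only [hσ, hc₀]
        rw [mul_assoc, hs2, mul_one]
      rw [hσueq]
      rcases lt_or_ge (x u) 0 with h | h
      · rw [if_pos h, abs_of_neg h]; ring
      · rw [if_neg (not_lt.2 h), abs_of_nonneg h]; ring
    set y : V → ℝ := fun v =>
      if v ∈ G₀.verts then x v else if v ∈ H.verts then σ v * |x u| else 0 with hy
    have hyG0v : ∀ v ∈ G₀.verts, y v = x v := by
      intro v hv; simp [hy, hv]
    have hyH : ∀ e ∈ H.edges, ∀ v ∈ e, y v = σ v * |x u| := by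
      intro e he v hv
      by_cases hvG : v ∈ G₀.verts
      · have hvu : v = u := Finset.mem_singleton.1
          (hsub (Finset.mem_inter.2 ⟨hvG, UHG.mem_verts_of_mem he hv⟩))
        rw [hyG0v v hvG, hvu]
        exact hσu.symm
      · have hvH : v ∈ H.verts := UHG.mem_verts_of_mem he hv
        simp [hy, hvG, hvH]
    have hprodσ : ∀ e ∈ H.edges, ∏ v ∈ e, σ v = -1 := by
      intro e he
      have hcard := H.uniform e he
      have hh1 : ∏ v ∈ e, σ v = c₀ ^ k * ∏ v ∈ e, sgn v := by
        simp only [hσ]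
        rw [Finset.prod_mul_distrib, Finset.prod_const, hcard]
      have hh2 : ∏ v ∈ e, sgn v = (-1:ℝ) ^ (e ∩ U).card := by
        simp only [hsgn]
        rw [Finset.prod_ite, Finset.prod_const, Finset.prod_const, one_pow, mul_one,
          Finset.filter_mem_eq_inter]
      have hck0 : c₀ ^ k = 1 := by
        rcases hc₀1 with h | h <;> rw [h]
        · exact one_pow k
        · exact hk.neg_one_pow
      rw [hh1, hh2, hck0, one_mul, (hU e he).neg_one_pow]
    have hQy : G.Qform y = G₀.Qform x := by
      rw [UHG.Qform, hE, Finset.sum_union hdisj]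
      have hq1 : ∑ e ∈ G₀.edges, ((∑ v ∈ e, y v ^ k) + (k:ℝ) * ∏ v ∈ e, y v)
          = G₀.Qform x := by
        refine Finset.sum_congr rfl fun e he => ?_
        have hsube : e ⊆ G₀.verts := fun v hv => Finset.mem_biUnion.2 ⟨e, he, hv⟩
        rw [Finset.sum_congr rfl (fun v hv => by rw [hyG0v v (hsube hv)]),
          Finset.prod_congr rfl (fun v hv => hyG0v v (hsube hv))]
      have hq2 : ∑ e ∈ H.edges, ((∑ v ∈ e, y v ^ k) + (k:ℝ) * ∏ v ∈ e, y v) = 0 := by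
        refine Finset.sum_eq_zero fun e he => ?_
        have hcard := H.uniform e he
        have hs : ∑ v ∈ e, y v ^ k = (k:ℝ) * |x u| ^ k := by
          rw [Finset.sum_congr rfl
            (fun v hv => by rw [hyH e he v hv, mul_pow, hσk v, one_mul])]
          rw [Finset.sum_const, hcard, nsmul_eq_mul]
        have hp : ∏ v ∈ e, y v = -(|x u| ^ k) := by
          rw [Finset.prod_congr rfl (fun v hv => hyH e he v hv), Finset.prod_mul_distrib,
            hprodσ e he, Finset.prod_const, hcard]
          ring
        rw [hs, hp]; ring
      rw [hq1, hq2, add_zero]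
    obtain ⟨e₁, he₁, hue₁⟩ := Finset.mem_biUnion.1 huH
    have hk2 : 2 ≤ k := by obtain ⟨m, rfl⟩ := hk; omega
    have hcard1 : 1 < e₁.card := by rw [H.uniform e₁ he₁]; omega
    obtain ⟨w, hwe₁, hwu⟩ := Finset.exists_mem_ne hcard1 u
    have hwH : w ∈ H.verts := UHG.mem_verts_of_mem he₁ hwe₁
    have hwG0 : w ∉ G₀.verts := by
      intro hwg
      exact hwu (Finset.mem_singleton.1 (hsub (Finset.mem_inter.2 ⟨hwg, hwH⟩)))
    have hyw : y w ^ k = |x u| ^ k := by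
      simp only [hy, if_neg hwG0, if_pos hwH]
      rw [mul_pow, hσk w, one_mul]
    have hxuk : 0 < |x u| ^ k := pow_pos (abs_pos.2 hxu) k
    have hysum : S + |x u| ^ k ≤ ∑ v : V, y v ^ k := by
      have hsplit : ∑ v ∈ G₀.verts, y v ^ k + ∑ v ∈ G₀.vertsᶜ, y v ^ k
          = ∑ v : V, y v ^ k := Finset.sum_add_sum_compl _ _
      have hA : ∑ v ∈ G₀.verts, y v ^ k = S := by
        refine Finset.sum_congr rfl fun v hv => ?_
        rw [hyG0v v hv]
      have hB : |x u| ^ k ≤ ∑ v ∈ G₀.vertsᶜ, y v ^ k := by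
        have hwmem : w ∈ G₀.vertsᶜ := Finset.mem_compl.2 hwG0
        have h6 := Finset.single_le_sum (f := fun v => y v ^ k)
          (fun v _ => hk.pow_nonneg _) hwmem
        simpa [hyw] using h6
      linarith
    have hS0 : 0 ≤ S := Finset.sum_nonneg fun v _ => hk.pow_nonneg _
    have hyne : (∑ v : V, y v ^ k) ≠ 0 := by
      have : 0 < ∑ v : V, y v ^ k := by linarith
      exact this.ne'
    have hvar := UHG.lamMin_le_rayleigh G hk hk0 y hyne
    rw [hQy] at hvar
    have hchain : lam * (S + |x u| ^ k) ≤ lam * ∑ v : V, y v ^ k :=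
      mul_le_mul_of_nonneg_left hysum hlam0
    have hexp : lam * (S + |x u| ^ k) = lam * S + lam * |x u| ^ k := mul_add _ _ _
    have hneg : 0 < lam * |x u| ^ k := mul_pos hlampos hxuk
    have hβ : (H.deg u : ℝ) * x u ^ k + ∑ e ∈ H.incEdges u, ∏ v ∈ e, x v < 0 := by
      linarith
    exact ⟨le_of_lt hβ, fun _ => hβ⟩
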